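/- Let R be a ring and V a right R-module of type FP_∞ (admitting a projective resolution by finitely generated projectives). If I_λ is an injective right R-module for each λ in an index set Λ, then Ext^i_R(V, ⊕_λ I_λ) = 0 for all i > 0. -/

import Mathlib

/-!
STATEMENT 0: Let R be a ring and V a right R-module of type FP_∞ (admitting a
projective resolution by finitely generated projectives). If I_λ is an injective
right R-module for each λ ∈ Λ, then Ext^i_R(V, ⊕_λ I_λ) = 0 for all i > 0.

Right R-modules are modules over Rᵐᵒᵖ; Ext groups are taken via the derived
functor `Ext` in the abelian category of right R-modules.
-/

open CategoryTheory

/-- A module is of type FP_∞ if it admits a projective resolution all of whose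
terms are finitely generated. -/
def ModuleCat.IsFPInfinity {R : Type} [Ring R] (M : ModuleCat R) : Prop :=
  ∃ P : CategoryTheory.ProjectiveResolution M, ∀ n : ℕ, Module.Finite R (P.complex.X n)

section Aux

open Limits

variable {A : Type} [Ring A]

/-- A product of injective modules is injective. -/
lemma Aux.pi_injective {ι : Type} (M : ι → Type) [∀ i, AddCommGroup (M i)]
    [∀ i, Module A (M i)] (h : ∀ i, Module.Injective A (M i)) :
    Module.Injective A (∀ i, M i) := by
  constructor
  intro X Y _ _ _ _ f hf g
  choose H hH using fun i => (h i).out f hf ((LinearMap.proj i) ∘ₗ g)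
  exact ⟨LinearMap.pi H, fun x => funext fun i => hH i x⟩

/-- A linear map from a finitely generated module to a direct sum of injective
modules, vanishing on the kernel of `v`, factors through `v`. -/
lemma Aux.key {B C : Type} [AddCommGroup B] [AddCommGroup C] [Module A B] [Module A C]
    [Module.Finite A B] {Λ : Type} (I : Λ → Type) [∀ l, AddCommGroup (I l)]
    [∀ l, Module A (I l)] (hinj : ∀ l, Module.Injective A (I l))
    (v : B →ₗ[A] C) (f : B →ₗ[A] DirectSum Λ I)
    (hker : ∀ b, v b = 0 → f b = 0) :
    ∃ g : C →ₗ[A] DirectSum Λ I, g ∘ₗ v = f := by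
  classical
  obtain ⟨s, hs⟩ : (⊤ : Submodule A B).FG := Module.Finite.fg_top
  set S : Finset Λ := s.sup fun b => (f b).support with hS
  have hsupp : ∀ b : B, ∀ l, l ∉ S → f b l = 0 := by
    intro b
    have hb : b ∈ Submodule.span A (s : Set B) := by rw [hs]; trivial
    induction hb using Submodule.span_induction with
    | mem x hx =>
        intro l hl
        by_contra hne
        exact hl (Finset.le_sup (f := fun b => (f b).support) hx
          (DFinsupp.mem_support_iff.2 hne))
    | zero => simp
    | add x y _ _ hx hy => intro l hl; simp [map_add, DirectSum.add_apply, hx l hl, hy l hl]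
    | smul a x _ hx => intro l hl; simp [map_smul, DirectSum.smul_apply, hx l hl]
  let J := ∀ l : {l // l ∈ S}, I l.1
  let f₀ : B →ₗ[A] J := LinearMap.pi fun l => (DirectSum.component A Λ I l.1) ∘ₗ f
  let ι : J →ₗ[A] DirectSum Λ I :=
    ∑ l ∈ S.attach, (DirectSum.lof A Λ I l.1) ∘ₗ LinearMap.proj l
  have hι : ∀ b, ι (f₀ b) = f b := by
    intro b
    have h1 : ι (f₀ b) = ∑ l ∈ S.attach, DirectSum.of I l.1 ((f b) l.1) := by
      simp only [ι, LinearMap.sum_apply, LinearMap.comp_apply, DirectSum.lof_eq_of]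
      rfl
    rw [h1, Finset.sum_attach S (fun l => DirectSum.of I l ((f b) l))]
    have hsub : (f b).support ⊆ S := by
      intro l hl
      by_contra h
      exact DFinsupp.mem_support_iff.1 hl (hsupp b l h)
    rw [← Finset.sum_subset hsub (fun l _ hl => by
      rw [DFinsupp.notMem_support_iff.1 hl, map_zero])]
    exact DirectSum.sum_support_of (f b)
  haveI hJ : Module.Injective A J := Aux.pi_injective _ (fun l => hinj l.1)
  have hle : LinearMap.ker v ≤ LinearMap.ker f₀ := by
    intro b hb
    have : f b = 0 := hker b hb
    simp only [LinearMap.mem_ker]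
    ext l
    show DirectSum.component A Λ I l.1 (f b) = _
    rw [this, map_zero]
    rfl
  let q : (B ⧸ LinearMap.ker v) →ₗ[A] J := Submodule.liftQ _ f₀ hle
  let e := LinearMap.quotKerEquivRange v
  obtain ⟨h, hh⟩ := hJ.out (LinearMap.range v).subtype (Submodule.injective_subtype _)
    (q ∘ₗ e.symm.toLinearMap)
  refine ⟨ι ∘ₗ h, ?_⟩
  ext b
  have hmem : v b ∈ LinearMap.range v := LinearMap.mem_range_self v b
  have h2 : h (v b) = q (e.symm ⟨v b, hmem⟩) := hh ⟨v b, hmem⟩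
  have h3 : e.symm ⟨v b, hmem⟩ = Submodule.Quotient.mk b := by
    rw [LinearEquiv.symm_apply_eq]
    rfl
  simp only [LinearMap.comp_apply, h2, h3]
  rw [show q (Submodule.Quotient.mk b) = f₀ b from rfl]
  rw [hι b]

/-- The homology of the Hom-complex vanishes in positive degrees. -/
lemma Aux.homology_isZero (R : Type) [Ring R]
    (V : Type) [AddCommGroup V] [Module Rᵐᵒᵖ V]
    (P : CategoryTheory.ProjectiveResolution (ModuleCat.of Rᵐᵒᵖ V))
    (hfin : ∀ n : ℕ, Module.Finite Rᵐᵒᵖ (P.complex.X n))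
    (Λ : Type) (I : Λ → Type)
    [∀ l, AddCommGroup (I l)] [∀ l, Module Rᵐᵒᵖ (I l)]
    (hinj : ∀ l, Module.Injective Rᵐᵒᵖ (I l))
    (n : ℕ) :
    IsZero ((P.complex.linearYonedaObj ℤ
      (ModuleCat.of Rᵐᵒᵖ (DirectSum Λ (fun l => I l)))).homology (n+1)) := by
  set Y : ModuleCat.{0} Rᵐᵒᵖ := ModuleCat.of Rᵐᵒᵖ (DirectSum Λ (fun l => I l)) with hY
  rw [← HomologicalComplex.exactAt_iff_isZero_homology]
  rw [HomologicalComplex.exactAt_iff' _ n (n+1) (n+2) (by simp) (by simp)]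
  rw [ShortComplex.moduleCat_exact_iff]
  intro x hx
  simp only [HomologicalComplex.shortComplexFunctor'_obj_X₂,
    HomologicalComplex.shortComplexFunctor'_obj_f,
    HomologicalComplex.shortComplexFunctor'_obj_g,
    ChainComplex.linearYonedaObj_d] at hx ⊢
  let x' : P.complex.X (n+1) ⟶ Y := x
  have hx' : P.complex.d (n+2) (n+1) ≫ x' = 0 := by
    exact hx
  have hexact := (ShortComplex.moduleCat_exact_iff _).1 (P.exact_succ n)
  haveI := hfin (n+1)
  obtain ⟨g, hg⟩ := Aux.key I hinj (P.complex.d (n+1) n).hom x'.hom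
    (by
      intro b hb
      obtain ⟨y, hy⟩ := hexact b hb
      have h0 := congrArg (fun φ => φ.hom y) hx'
      simp only [ModuleCat.hom_comp, LinearMap.comp_apply] at h0
      rw [← hy]
      simpa using h0)
  refine ⟨ModuleCat.ofHom g, ?_⟩
  show P.complex.d (n + 1) n ≫ ModuleCat.ofHom g = x'
  exact ModuleCat.hom_ext hg

end Aux

theorem ext_directSum_injective_eq_zero
    (R : Type) [Ring R]
    (V : Type) [AddCommGroup V] [Module Rᵐᵒᵖ V]
    (hV : ModuleCat.IsFPInfinity (ModuleCat.of Rᵐᵒᵖ V))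
    (Λ : Type) (I : Λ → Type)
    [∀ l, AddCommGroup (I l)] [∀ l, Module Rᵐᵒᵖ (I l)]
    (hinj : ∀ l, Module.Injective Rᵐᵒᵖ (I l))
    (i : ℕ) (hi : 0 < i) :
    Subsingleton
      (((Ext ℤ (ModuleCat Rᵐᵒᵖ) i).obj
          (Opposite.op (ModuleCat.of Rᵐᵒᵖ V))).obj
        (ModuleCat.of Rᵐᵒᵖ (DirectSum Λ (fun l => I l)))) := by
  obtain ⟨P, hfin⟩ := hV
  obtain ⟨n, rfl⟩ : ∃ n, i = n + 1 := ⟨i - 1, by omega⟩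
  have hz := Aux.homology_isZero R V P hfin Λ I hinj n
  have hzero : Limits.IsZero (((Ext ℤ (ModuleCat Rᵐᵒᵖ) (n+1)).obj
      (Opposite.op (ModuleCat.of Rᵐᵒᵖ V))).obj
      (ModuleCat.of Rᵐᵒᵖ (DirectSum Λ (fun l => I l)))) :=
    hz.of_iso (P.isoExt (R := ℤ) (n+1) (ModuleCat.of Rᵐᵒᵖ (DirectSum Λ (fun l => I l))))
  set E := ((Ext ℤ (ModuleCat Rᵐᵒᵖ) (n+1)).obj
      (Opposite.op (ModuleCat.of Rᵐᵒᵖ V))).obj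
      (ModuleCat.of Rᵐᵒᵖ (DirectSum Λ (fun l => I l))) with hE
  have hid : (𝟙 E : E ⟶ E) = 0 := hzero.eq_of_src _ _
  have hall : ∀ t : E, t = 0 := fun t => by
    have h := congrArg (fun φ => φ.hom t) hid
    simpa using h
  exact ⟨fun a b => by rw [hall a, hall b]⟩
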